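/- The function s ↦ Γ(s + 1/2)/(4s√π) − Γ(s)/4, defined for real s ≠ 0 near 0, tends to −(ln 2)/2 as s → 0. -/

import Mathlib

open Real Filter

noncomputable def G (s : ℝ) : ℝ :=
  Real.exp (-(2*s) * Real.log 2) * (Real.Gamma (2*s+1) / Real.Gamma (s+1)) - Real.Gamma (s+1)

lemma hG0 : G 0 = 0 := by simp [G, Real.Gamma_one]

lemma hGderiv : HasDerivAt G (-(2 * Real.log 2)) 0 := by
  have hΓ1 : DifferentiableAt ℝ Real.Gamma 1 := by
    apply Real.differentiableAt_Gamma
    intro m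
    have : (0:ℝ) ≤ m := Nat.cast_nonneg m
    nlinarith
  set d := deriv Real.Gamma 1 with hd
  have hdd : HasDerivAt Real.Gamma d 1 := hΓ1.hasDerivAt
  have h1 : HasDerivAt (fun s : ℝ => Real.Gamma (s+1)) d 0 := by
    have hin : HasDerivAt (fun s : ℝ => s+1) 1 0 := (hasDerivAt_id (0:ℝ)).add_const 1
    have hdd' : HasDerivAt Real.Gamma d ((fun s : ℝ => s+1) 0) := by simpa using hdd
    simpa [Function.comp_def] using hdd'.comp 0 hin
  have h2 : HasDerivAt (fun s : ℝ => Real.Gamma (2*s+1)) (d*2) 0 := by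
    have hin : HasDerivAt (fun s : ℝ => 2*s+1) 2 0 := by
      simpa using ((hasDerivAt_id (0:ℝ)).const_mul (2:ℝ)).add_const 1
    have hdd' : HasDerivAt Real.Gamma d ((fun s : ℝ => 2*s+1) 0) := by
      norm_num; simpa using hdd
    simpa [Function.comp_def] using hdd'.comp 0 hin
  have hexp : HasDerivAt (fun s : ℝ => Real.exp (-(2*s) * Real.log 2))
      (-(2 * Real.log 2)) 0 := by
    have hin : HasDerivAt (fun s : ℝ => -(2*s) * Real.log 2) (-(2 * Real.log 2)) 0 := by
      simpa [neg_mul, mul_comm] using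
        (((hasDerivAt_id (0:ℝ)).const_mul 2).neg.mul_const (Real.log 2))
    have := (Real.hasDerivAt_exp ((-(2*(0:ℝ))) * Real.log 2)).comp 0 hin
    simpa [Function.comp_def] using this
  have hΓ1ne : Real.Gamma ((0:ℝ)+1) ≠ 0 := by norm_num [Real.Gamma_one]
  have hdiv : HasDerivAt (fun s : ℝ => Real.Gamma (2*s+1) / Real.Gamma (s+1))
      ((d*2 * Real.Gamma ((0:ℝ)+1) - Real.Gamma (2*(0:ℝ)+1) * d) / Real.Gamma ((0:ℝ)+1) ^ 2)
      0 := h2.div h1 hΓ1ne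
  have h := (hexp.mul hdiv).sub h1
  refine h.congr_deriv ?_
  norm_num [Real.Gamma_one]
  ring

theorem stmt0 :
    Tendsto (fun s : ℝ => Real.Gamma (s + 1/2) / (4 * s * Real.sqrt π) - Real.Gamma s / 4)
      (nhdsWithin 0 {(0:ℝ)}ᶜ) (nhds (-(Real.log 2) / 2)) := by
  have hslope : Tendsto (slope G 0) (nhdsWithin 0 {(0:ℝ)}ᶜ) (nhds (-(2 * Real.log 2))) :=
    hasDerivAt_iff_tendsto_slope.mp hGderiv
  have h4 : Tendsto (fun s => slope G 0 s / 4) (nhdsWithin 0 {(0:ℝ)}ᶜ)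
      (nhds (-(Real.log 2) / 2)) := by
    have := hslope.div_const 4
    convert this using 2
    ring
  apply h4.congr'
  have hball : ∀ᶠ s in nhdsWithin (0:ℝ) {(0:ℝ)}ᶜ, |s| < 1/4 := by
    apply Filter.Eventually.filter_mono nhdsWithin_le_nhds
    have := Metric.ball_mem_nhds (0:ℝ) (by norm_num : (0:ℝ) < 1/4)
    filter_upwards [this] with s hs
    simpa [Real.dist_eq] using hs
  filter_upwards [hball, eventually_mem_nhdsWithin] with s hlt hs
  have hs0 : s ≠ 0 := hs
  have hΓs : Real.Gamma s ≠ 0 := by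
    apply Real.Gamma_ne_zero
    intro m
    rcases Nat.eq_zero_or_pos m with hm | hm
    · simpa [hm] using hs0
    · intro h
      have : (1:ℝ) ≤ m := by exact_mod_cast hm
      rw [h] at hlt
      rw [abs_neg, abs_of_nonneg (by linarith)] at hlt
      linarith
  have hπ : Real.sqrt π ≠ 0 := ne_of_gt (Real.sqrt_pos.mpr Real.pi_pos)
  have hdup : Real.Gamma s * Real.Gamma (s + 1/2)
      = Real.Gamma (2*s) * (2 * Real.exp (-(2*s) * Real.log 2)) * Real.sqrt π := by
    have h := Real.Gamma_mul_Gamma_add_half s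
    rw [h]
    congr 2
    rw [Real.rpow_def_of_pos (by norm_num : (0:ℝ) < 2)]
    rw [show Real.log 2 * (1 - 2*s) = Real.log 2 + (-(2*s) * Real.log 2) by ring,
      Real.exp_add, Real.exp_log (by norm_num : (0:ℝ) < 2)]
  have hΓs1 : Real.Gamma (s+1) = s * Real.Gamma s := Real.Gamma_add_one hs0
  have hΓ2s1 : Real.Gamma (2*s+1) = 2*s * Real.Gamma (2*s) :=
    Real.Gamma_add_one (by simpa using hs0)
  rw [slope_def_field, hG0]
  unfold G
  rw [hΓs1, hΓ2s1]
  set E := Real.exp (-(2*s) * Real.log 2) with hE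
  set A := Real.Gamma (s + 1/2) with hA
  set B := Real.Gamma s with hB
  set C := Real.Gamma (2*s) with hC
  field_simp
  linear_combination (-s) * hdup
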